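/- arXiv:1806.05812 — 5 statements merged into one kernel-verified Lean document; each statement's English description precedes it below -/
import Mathlib

section
/- Let h : ℝⁿ → ℝ be a smooth convex function and ξ : [0,∞) → ℝⁿ a gradient flow of h, i.e. ξ'(t) = -∇h(ξ(t)). Then for every τ > 0 and every ξ* ∈ ℝⁿ, |∇h(ξ(τ))|² ≤ |∇h(ξ*)|² + |ξ* - ξ(0)|²/τ². -/
open Real Set InnerProductSpace Filter

local notation "⟪" x ", " y "⟫" => @inner ℝ _ _ x y

lemma grad_flow_aux_ineq {n : ℕ} {h : EuclideanSpace ℝ (Fin n) → ℝ}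
    (hd : Differentiable ℝ h) (hconv : ConvexOn ℝ Set.univ h)
    (x y : EuclideanSpace ℝ (Fin n)) :
    h x + ⟪gradient h x, y - x⟫ ≤ h y := by
  set c : ℝ → EuclideanSpace ℝ (Fin n) := fun s => x + s • (y - x) with hc
  have hcd : HasDerivAt c (y - x) 0 := by
    simpa [hc] using ((hasDerivAt_id (0:ℝ)).smul_const (y - x)).const_add x
  have hg : HasFDerivAt h (toDual ℝ _ (gradient h x)) x :=
    hasGradientAt_iff_hasFDerivAt.mp (hd x).hasGradientAt
  have hc0 : c 0 = x := by simp [hc]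
  have hφ : HasDerivAt (h ∘ c) ⟪gradient h x, y - x⟫ 0 := by
    have := (hc0 ▸ hg).comp_hasDerivAt 0 hcd
    simpa [toDual_apply_apply, hc0] using this
  have hcc : ConvexOn ℝ Set.univ (h ∘ c) := by
    have : ConvexOn ℝ ((AffineMap.lineMap x y : ℝ →ᵃ[ℝ] _) ⁻¹' Set.univ)
        (h ∘ (AffineMap.lineMap x y : ℝ →ᵃ[ℝ] _)) := hconv.comp_affineMap _
    simpa [hc, Function.comp_def, AffineMap.lineMap_apply, add_comm] using this
  have hs := hcc.le_slope_of_hasDerivAt (Set.mem_univ (0:ℝ)) (Set.mem_univ (1:ℝ))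
    zero_lt_one hφ
  have h0 : (h ∘ c) 0 = h x := by simp [hc]
  have h1 : (h ∘ c) 1 = h y := by simp [hc]
  rw [slope_def_field, h0, h1] at hs
  simp only [div_one, sub_zero] at hs
  linarith

lemma grad_flow_aux_mono {n : ℕ} {h : EuclideanSpace ℝ (Fin n) → ℝ}
    (hd : Differentiable ℝ h) (hconv : ConvexOn ℝ Set.univ h)
    (x y : EuclideanSpace ℝ (Fin n)) :
    0 ≤ ⟪gradient h y - gradient h x, y - x⟫ := by
  have h1 := grad_flow_aux_ineq hd hconv x y
  have h2 := grad_flow_aux_ineq hd hconv y x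
  have e : x - y = -(y - x) := by abel
  rw [e, inner_neg_right] at h2
  rw [inner_sub_left]
  linarith

lemma grad_flow_aux_normsq {n : ℕ} {u : ℝ → EuclideanSpace ℝ (Fin n)}
    {u' : EuclideanSpace ℝ (Fin n)} {t : ℝ} (hu : HasDerivAt u u' t) :
    HasDerivAt (fun s => ‖u s‖ ^ 2) (2 * ⟪u', u t⟫) t := by
  have := hu.inner ℝ hu
  have e : ⟪u t, u'⟫ + ⟪u', u t⟫ = 2 * ⟪u', u t⟫ := by
    rw [real_inner_comm (u t) u']; ring
  rw [e] at this
  have e2 : (fun s => ‖u s‖ ^ 2) = fun s => ⟪u s, u s⟫ := by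
    funext s
    rw [← real_inner_self_eq_norm_sq]
  rw [e2]; exact this

/-- Along a gradient flow `ξ` of a smooth convex function `h` on `ℝⁿ`,
for every `τ > 0` and every point `ξ*`,
`‖∇h(ξ τ)‖² ≤ ‖∇h ξ*‖² + ‖ξ* - ξ 0‖²/τ²`. -/
theorem gradient_flow_norm_grad_sq_bound
    {n : ℕ} (h : EuclideanSpace ℝ (Fin n) → ℝ)
    (hsmooth : ContDiff ℝ 2 h)
    (hconv : ConvexOn ℝ Set.univ h)
    (ξ : ℝ → EuclideanSpace ℝ (Fin n))
    (hflow : ∀ t : ℝ, 0 ≤ t → HasDerivAt ξ (-(gradient h (ξ t))) t)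
    (τ : ℝ) (hτ : 0 < τ) (ξast : EuclideanSpace ℝ (Fin n)) :
    ‖gradient h (ξ τ)‖ ^ 2 ≤ ‖gradient h ξast‖ ^ 2 + ‖ξast - ξ 0‖ ^ 2 / τ ^ 2 := by
  have hd : Differentiable ℝ h := hsmooth.differentiable (by norm_num)
  -- derivative of the shifted flow
  have hflow' : ∀ δ t : ℝ, 0 ≤ δ → 0 ≤ t →
      HasDerivAt (fun s => ξ (s + δ)) (-(gradient h (ξ (t + δ)))) t := by
    intro δ t hδ ht
    have := (hflow (t + δ) (by linarith)).scomp t ((hasDerivAt_id t).add_const δ)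
    simpa [Function.comp_def] using this
  -- derivative of h ∘ ξ
  have hb : ∀ t : ℝ, 0 ≤ t → HasDerivAt (fun s => h (ξ s)) (-‖gradient h (ξ t)‖ ^ 2) t := by
    intro t ht
    have hg : HasFDerivAt h (toDual ℝ _ (gradient h (ξ t))) (ξ t) :=
      hasGradientAt_iff_hasFDerivAt.mp (hd (ξ t)).hasGradientAt
    have := hg.comp_hasDerivAt t (hflow t ht)
    rw [toDual_apply_apply, inner_neg_right, real_inner_self_eq_norm_sq] at this
    exact this
  -- for δ > 0, t ↦ ‖ξ (t+δ) - ξ t‖² is nonincreasing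
  have hw : ∀ δ : ℝ, 0 < δ → ∀ s t : ℝ, 0 ≤ s → s ≤ t →
      ‖ξ (t + δ) - ξ t‖ ^ 2 ≤ ‖ξ (s + δ) - ξ s‖ ^ 2 := by
    intro δ hδ s t hs hst
    have hderiv : ∀ x : ℝ, 0 ≤ x → HasDerivAt (fun r => ‖ξ (r + δ) - ξ r‖ ^ 2)
        (2 * ⟪-(gradient h (ξ (x + δ))) - -(gradient h (ξ x)), ξ (x + δ) - ξ x⟫) x := by
      intro x hx
      exact grad_flow_aux_normsq ((hflow' δ x hδ.le hx).sub (hflow x hx))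
    have hanti : AntitoneOn (fun r => ‖ξ (r + δ) - ξ r‖ ^ 2) (Icc s t) := by
      apply antitoneOn_of_deriv_nonpos (convex_Icc s t)
      · intro x hx
        exact (hderiv x (le_trans hs hx.1)).continuousAt.continuousWithinAt
      · intro x hx
        rw [interior_Icc] at hx
        exact (hderiv x (le_trans hs hx.1.le)).differentiableAt.differentiableWithinAt
      · intro x hx
        rw [interior_Icc] at hx
        rw [(hderiv x (le_trans hs hx.1.le)).deriv]
        have hmono := grad_flow_aux_mono hd hconv (ξ x) (ξ (x + δ))
        have e : -(gradient h (ξ (x + δ))) - -(gradient h (ξ x))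
            = -(gradient h (ξ (x + δ)) - gradient h (ξ x)) := by abel
        rw [e, inner_neg_left]
        linarith
    exact hanti (left_mem_Icc.mpr hst) (right_mem_Icc.mpr hst) hst
  -- the norm of the gradient, via difference quotients
  have hslope : ∀ u : ℝ, 0 ≤ u → Tendsto (fun δ : ℝ => ‖ξ (u + δ) - ξ u‖ ^ 2 / δ ^ 2)
      (nhdsWithin 0 (Ioi 0)) (nhds (‖gradient h (ξ u)‖ ^ 2)) := by
    intro u hu
    have h1 : Tendsto (slope ξ u) (nhdsWithin u {u}ᶜ) (nhds (-(gradient h (ξ u)))) :=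
      hasDerivAt_iff_tendsto_slope.mp (hflow u hu)
    have h2 : Tendsto (fun y => ‖slope ξ u y‖ ^ 2) (nhdsWithin u {u}ᶜ)
        (nhds (‖gradient h (ξ u)‖ ^ 2)) := by
      have hcont : Continuous fun v : EuclideanSpace ℝ (Fin n) => ‖v‖ ^ 2 := by
        exact (continuous_norm.pow 2)
      have := (hcont.tendsto _).comp h1
      simpa [Function.comp_def] using this
    have h3 : Tendsto (fun δ : ℝ => u + δ) (nhdsWithin 0 (Ioi 0)) (nhdsWithin u {u}ᶜ) := by
      apply tendsto_nhdsWithin_of_tendsto_nhds_of_eventually_within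
      · have : Tendsto (fun δ : ℝ => u + δ) (nhds 0) (nhds u) := by
          simpa using tendsto_const_nhds.add (continuous_id.tendsto (0:ℝ))
        exact this.mono_left nhdsWithin_le_nhds
      · filter_upwards [self_mem_nhdsWithin] with δ hδ
        have : (0:ℝ) < δ := hδ
        simp only [Set.mem_compl_iff, Set.mem_singleton_iff]
        intro hc
        have hδ0 : δ = 0 := by linarith [hc]
        linarith
    have h4 := h2.comp h3
    apply h4.congr'
    filter_upwards [self_mem_nhdsWithin] with δ hδ
    have hδ' : (0:ℝ) < δ := hδ
    simp only [Function.comp]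
    rw [slope]
    rw [vsub_eq_sub, add_sub_cancel_left]
    rw [norm_smul]
    rw [mul_pow, norm_inv, Real.norm_eq_abs, abs_of_pos hδ', inv_pow]
    rw [inv_mul_eq_div]
  -- ‖∇h(ξ t)‖² is nonincreasing
  have ha : ∀ s t : ℝ, 0 ≤ s → s ≤ t →
      ‖gradient h (ξ t)‖ ^ 2 ≤ ‖gradient h (ξ s)‖ ^ 2 := by
    intro s t hs hst
    have ht : 0 ≤ t := le_trans hs hst
    refine le_of_tendsto_of_tendsto (hslope t ht) (hslope s hs) ?_
    filter_upwards [self_mem_nhdsWithin] with δ hδ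
    have hδ' : (0:ℝ) < δ := hδ
    have := hw δ hδ' s t hs hst
    gcongr
  -- the Lyapunov function
  set A := ‖gradient h (ξ τ)‖ ^ 2 with hA
  set Φ : ℝ → ℝ := fun t => 2 * t * (h (ξ t) - h ξast) + ‖ξ t - ξast‖ ^ 2 + t ^ 2 * A with hΦ
  have hΦd : ∀ t : ℝ, 0 ≤ t → HasDerivAt Φ
      (2 * (h (ξ t) - h ξast) + 2 * t * (-‖gradient h (ξ t)‖ ^ 2)
        + 2 * ⟪-(gradient h (ξ t)), ξ t - ξast⟫ + 2 * t * A) t := by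
    intro t ht
    have d1 : HasDerivAt (fun s => 2 * s * (h (ξ s) - h ξast))
        (2 * (h (ξ t) - h ξast) + 2 * t * (-‖gradient h (ξ t)‖ ^ 2)) t := by
      have := ((hasDerivAt_id t).const_mul (2:ℝ)).mul ((hb t ht).sub_const (h ξast))
      simpa [mul_one, Pi.mul_def] using this
    have d2 : HasDerivAt (fun s => ‖ξ s - ξast‖ ^ 2)
        (2 * ⟪-(gradient h (ξ t)), ξ t - ξast⟫) t :=
      grad_flow_aux_normsq ((hflow t ht).sub_const ξast)
    have d3 : HasDerivAt (fun s : ℝ => s ^ 2 * A) (2 * t * A) t := by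
      have := (hasDerivAt_pow 2 t).mul_const A
      simpa [mul_comm, mul_assoc] using this
    exact (d1.add d2).add d3
  have hΦanti : AntitoneOn Φ (Icc 0 τ) := by
    apply antitoneOn_of_deriv_nonpos (convex_Icc 0 τ)
    · intro x hx
      exact (hΦd x hx.1).continuousAt.continuousWithinAt
    · intro x hx
      rw [interior_Icc] at hx
      exact (hΦd x hx.1.le).differentiableAt.differentiableWithinAt
    · intro x hx
      rw [interior_Icc] at hx
      rw [(hΦd x hx.1.le).deriv]
      have h1 : h (ξ x) - h ξast ≤ ⟪gradient h (ξ x), ξ x - ξast⟫ := by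
        have := grad_flow_aux_ineq hd hconv (ξ x) ξast
        have e : ξast - ξ x = -(ξ x - ξast) := by abel
        rw [e, inner_neg_right] at this
        linarith
      have h2 : A ≤ ‖gradient h (ξ x)‖ ^ 2 := ha x τ hx.1.le hx.2.le
      rw [inner_neg_left]
      nlinarith [mul_le_mul_of_nonneg_left h2 (by linarith [hx.1] : (0:ℝ) ≤ 2 * x)]
  have hΦτ : Φ τ ≤ Φ 0 := hΦanti (left_mem_Icc.mpr hτ.le) (right_mem_Icc.mpr hτ.le) hτ.le
  have hΦ0 : Φ 0 = ‖ξ 0 - ξast‖ ^ 2 := by simp [hΦ]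
  have key : 2 * τ * (h (ξ τ) - h ξast) + ‖ξ τ - ξast‖ ^ 2 + τ ^ 2 * A ≤ ‖ξ 0 - ξast‖ ^ 2 := by
    rw [← hΦ0]; exact hΦτ
  -- finish
  have hb' : ⟪gradient h ξast, ξ τ - ξast⟫ ≤ h (ξ τ) - h ξast := by
    have := grad_flow_aux_ineq hd hconv ξast (ξ τ)
    linarith
  have hcs := abs_real_inner_le_norm (gradient h ξast) (ξ τ - ξast)
  have t1 : 2 * τ * ⟪gradient h ξast, ξ τ - ξast⟫ ≤ 2 * τ * (h (ξ τ) - h ξast) :=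
    mul_le_mul_of_nonneg_left hb' (by linarith)
  have t2 : 2 * τ * (-(‖gradient h ξast‖ * ‖ξ τ - ξast‖))
      ≤ 2 * τ * ⟪gradient h ξast, ξ τ - ξast⟫ :=
    mul_le_mul_of_nonneg_left (abs_le.mp hcs).1 (by linarith)
  have t3 := sq_nonneg (τ * ‖gradient h ξast‖ - ‖ξ τ - ξast‖)
  have hfin : τ ^ 2 * A ≤ τ ^ 2 * ‖gradient h ξast‖ ^ 2 + ‖ξ 0 - ξast‖ ^ 2 := by
    nlinarith [key, t1, t2, t3]
  have hτ2 : (0:ℝ) < τ ^ 2 := by positivity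
  rw [norm_sub_rev ξast (ξ 0)]
  calc A = τ ^ 2 * A / τ ^ 2 := by field_simp
    _ ≤ (τ ^ 2 * ‖gradient h ξast‖ ^ 2 + ‖ξ 0 - ξast‖ ^ 2) / τ ^ 2 := by gcongr
    _ = ‖gradient h ξast‖ ^ 2 + ‖ξ 0 - ξast‖ ^ 2 / τ ^ 2 := by field_simp
end

section
/- Define the Euclidean edge length ℓ(r_v, r_u, Θ) = √(r_v² + r_u² + 2 r_v r_u cos Θ) for radii r_v, r_u > 0 and angle Θ ∈ [0, π/2]. Then for any three radii r₁, r₂, r₃ > 0 and weights Θ₁, Θ₂, Θ₃ ∈ [0, π/2], the three lengths ℓ₁ = ℓ(r₂, r₃, Θ₁), ℓ₂ = ℓ(r₁, r₃, Θ₂), ℓ₃ = ℓ(r₁, r₂, Θ₃) satisfy the strict triangle inequalities, so they are the side lengths of a nondegenerate Euclidean triangle. -/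
open Real

/-- Euclidean distance between the centers of two circles of radii `a`, `b`
meeting at angle `θ`. -/
noncomputable def circleEdgeLength (a b θ : ℝ) : ℝ :=
  Real.sqrt (a ^ 2 + b ^ 2 + 2 * a * b * Real.cos θ)

lemma cel_gt_left (a b θ : ℝ) (ha : 0 < a) (hb : 0 < b) (hc : 0 ≤ Real.cos θ) :
    a < circleEdgeLength a b θ := by
  rw [circleEdgeLength, Real.lt_sqrt ha.le]
  nlinarith [mul_nonneg (mul_nonneg (by positivity : (0:ℝ) ≤ 2 * a) hb.le) hc]

lemma cel_gt_right (a b θ : ℝ) (ha : 0 < a) (hb : 0 < b) (hc : 0 ≤ Real.cos θ) :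
    b < circleEdgeLength a b θ := by
  rw [circleEdgeLength, Real.lt_sqrt hb.le]
  nlinarith [mul_nonneg (mul_nonneg (by positivity : (0:ℝ) ≤ 2 * a) hb.le) hc]

lemma cel_le_add (a b θ : ℝ) (ha : 0 < a) (hb : 0 < b) :
    circleEdgeLength a b θ ≤ a + b := by
  have h1 : a ^ 2 + b ^ 2 + 2 * a * b * Real.cos θ ≤ (a + b) ^ 2 := by
    nlinarith [mul_nonneg (mul_nonneg (by positivity : (0:ℝ) ≤ 2 * a) hb.le)
      (by linarith [Real.cos_le_one θ] : 0 ≤ 1 - Real.cos θ)]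
  calc circleEdgeLength a b θ ≤ Real.sqrt ((a + b) ^ 2) := Real.sqrt_le_sqrt h1
    _ = a + b := Real.sqrt_sq (by positivity)

/-- For positive radii and nonobtuse weights, the three circle-pattern edge
lengths satisfy the strict triangle inequalities. -/
theorem circle_pattern_triangle_inequality
    (r₁ r₂ r₃ Θ₁ Θ₂ Θ₃ : ℝ)
    (hr₁ : 0 < r₁) (hr₂ : 0 < r₂) (hr₃ : 0 < r₃)
    (hΘ₁ : Θ₁ ∈ Set.Icc 0 (π / 2)) (hΘ₂ : Θ₂ ∈ Set.Icc 0 (π / 2))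
    (hΘ₃ : Θ₃ ∈ Set.Icc 0 (π / 2)) :
    circleEdgeLength r₂ r₃ Θ₁ < circleEdgeLength r₁ r₃ Θ₂ + circleEdgeLength r₁ r₂ Θ₃ ∧
    circleEdgeLength r₁ r₃ Θ₂ < circleEdgeLength r₂ r₃ Θ₁ + circleEdgeLength r₁ r₂ Θ₃ ∧
    circleEdgeLength r₁ r₂ Θ₃ < circleEdgeLength r₂ r₃ Θ₁ + circleEdgeLength r₁ r₃ Θ₂ := by
  have pi2 : (0:ℝ) < π / 2 := by positivity
  have hc₁ : 0 ≤ Real.cos Θ₁ :=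
    Real.cos_nonneg_of_mem_Icc ⟨by linarith [hΘ₁.1], hΘ₁.2⟩
  have hc₂ : 0 ≤ Real.cos Θ₂ :=
    Real.cos_nonneg_of_mem_Icc ⟨by linarith [hΘ₂.1], hΘ₂.2⟩
  have hc₃ : 0 ≤ Real.cos Θ₃ :=
    Real.cos_nonneg_of_mem_Icc ⟨by linarith [hΘ₃.1], hΘ₃.2⟩
  refine ⟨?_, ?_, ?_⟩
  · calc circleEdgeLength r₂ r₃ Θ₁ ≤ r₂ + r₃ := cel_le_add _ _ _ hr₂ hr₃
      _ < circleEdgeLength r₁ r₃ Θ₂ + circleEdgeLength r₁ r₂ Θ₃ := by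
        have := cel_gt_right r₁ r₃ Θ₂ hr₁ hr₃ hc₂
        have := cel_gt_right r₁ r₂ Θ₃ hr₁ hr₂ hc₃
        linarith
  · calc circleEdgeLength r₁ r₃ Θ₂ ≤ r₁ + r₃ := cel_le_add _ _ _ hr₁ hr₃
      _ < circleEdgeLength r₂ r₃ Θ₁ + circleEdgeLength r₁ r₂ Θ₃ := by
        have := cel_gt_right r₂ r₃ Θ₁ hr₂ hr₃ hc₁
        have := cel_gt_left r₁ r₂ Θ₃ hr₁ hr₂ hc₃
        linarith
  · calc circleEdgeLength r₁ r₂ Θ₃ ≤ r₁ + r₂ := cel_le_add _ _ _ hr₁ hr₂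
      _ < circleEdgeLength r₂ r₃ Θ₁ + circleEdgeLength r₁ r₃ Θ₂ := by
        have := cel_gt_left r₂ r₃ Θ₁ hr₂ hr₃ hc₁
        have := cel_gt_left r₁ r₃ Θ₂ hr₁ hr₃ hc₂
        linarith
end

section
/- In the Euclidean circle-packing triangle with radii r₁, r₂, r₃ > 0 and nonobtuse intersection angles Θ₁, Θ₂, Θ₃ ∈ [0, π/2], the angle θ₁ at the center of the first circle, defined by cos θ₁ = (ℓ₃² + ℓ₂² − ℓ₁²)/(2ℓ₃ℓ₂) with ℓ_i as the opposite side lengths, is strictly decreasing in r₁: ∂θ₁/∂r₁ < 0. -/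
open Real

/-- The angle at the center of the first circle in the circle-packing triangle
with radii `r₁ r₂ r₃` and weights `Θ₁ Θ₂ Θ₃` (where `Θᵢ` is the weight of the
edge opposite to vertex `i`), by the law of cosines. -/
noncomputable def circleAngle (Θ₁ Θ₂ Θ₃ r₁ r₂ r₃ : ℝ) : ℝ :=
  Real.arccos ((circleEdgeLength r₁ r₃ Θ₂ ^ 2 + circleEdgeLength r₁ r₂ Θ₃ ^ 2 -
      circleEdgeLength r₂ r₃ Θ₁ ^ 2) /
    (2 * circleEdgeLength r₁ r₃ Θ₂ * circleEdgeLength r₁ r₂ Θ₃))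

private lemma key1 (s x y c1 c2 c3 : ℝ) (hs : 0 < s) (hx : 0 < x) (hy : 0 < y)
    (h10 : 0 ≤ c1) (h20 : 0 ≤ c2) (h21 : c2 ≤ 1) (h30 : 0 ≤ c3) (h31 : c3 ≤ 1) :
    0 < (2*s + 2*y*c2) * (s^2 + x^2 + 2*s*x*c3) *
          ((s^2 + y^2 + 2*s*y*c2) + (x^2 + y^2 + 2*x*y*c1) - (s^2 + x^2 + 2*s*x*c3))
      + (s^2 + y^2 + 2*s*y*c2) * (2*s + 2*x*c3) *
          ((s^2 + x^2 + 2*s*x*c3) + (x^2 + y^2 + 2*x*y*c1) - (s^2 + y^2 + 2*s*y*c2)) := by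
  have hW : 0 ≤ (s^2 + s*y*c2)*(s^2 + x^2 + 2*s*x*c3) + (s^2 + s*x*c3)*(s^2 + y^2 + 2*s*y*c2) := by
    have h1 : 0 ≤ s*y*c2 := by positivity
    have h2 : 0 ≤ s*x*c3 := by positivity
    nlinarith [sq_nonneg s, sq_nonneg x, sq_nonneg y, mul_nonneg (by positivity : (0:ℝ) ≤ s^2) h1,
      mul_pos hs hx, mul_pos hs hy]
  have t1 : 0 ≤ 4*(x*y)*c1*((s^2 + s*y*c2)*(s^2 + x^2 + 2*s*x*c3) + (s^2 + s*x*c3)*(s^2 + y^2 + 2*s*y*c2)) :=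
    mul_nonneg (mul_nonneg (by positivity) h10) hW
  have t2 : 0 ≤ 4*s^4*y^2*((1-c2)*(1+c2)) := by
    have : 0 ≤ (1-c2)*(1+c2) := mul_nonneg (by linarith) (by linarith)
    positivity
  have t3 : 0 ≤ 4*s^4*x^2*((1-c3)*(1+c3)) := by
    have : 0 ≤ (1-c3)*(1+c3) := mul_nonneg (by linarith) (by linarith)
    positivity
  have t4 : 0 ≤ 8*s^4*(x*y)*(c2*c3) := by positivity
  have t5 : 0 ≤ 4*s^2*x^2*y^2*c3^2 := by positivity
  have t6 : 0 ≤ 4*s^2*x^2*y^2*c2^2 := by positivity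
  have t7 : 0 ≤ 4*(x^2+y^2)*s^2*(x*y)*(c2*c3) := by positivity
  have t8 : 0 ≤ 4*s*x^2*y^2*(y*c2 + x*c3) := by
    have : 0 ≤ y*c2 + x*c3 := by positivity
    positivity
  have t9 : 0 ≤ 12*s^3*x*y^2*c3 := by positivity
  have t10 : 0 ≤ 12*s^3*x^2*y*c2 := by positivity
  have t11 : 0 < 8*s^2*x^2*y^2 := by positivity
  nlinarith [t1, t2, t3, t4, t5, t6, t7, t8, t9, t10, t11, hs]

private lemma key2 (s x y c1 c2 c3 : ℝ) (hs : 0 < s) (hx : 0 < x) (hy : 0 < y)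
    (h10 : 0 ≤ c1) (h11 : c1 ≤ 1) (h20 : 0 ≤ c2) (h21 : c2 ≤ 1) (h30 : 0 ≤ c3) (h31 : c3 ≤ 1) :
    ((s^2 + y^2 + 2*s*y*c2) + (s^2 + x^2 + 2*s*x*c3) - (x^2 + y^2 + 2*x*y*c1))^2
      < 4 * (s^2 + y^2 + 2*s*y*c2) * (s^2 + x^2 + 2*s*x*c3) := by
  have e1 : 0 ≤ x^2*y^2*((1-c1)*(1+c1)) :=
    mul_nonneg (by positivity) (mul_nonneg (by linarith) (by linarith))
  have e3 : 0 ≤ s*x*y^2*(c1*c2) := by positivity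
  have e4 : 0 ≤ s*x^2*y*c2 := by positivity
  have e5 : 0 ≤ s*x^2*y*(c1*c3) := by positivity
  have e6 : 0 ≤ s^2*y^2*((1-c2)*(1+c2)) :=
    mul_nonneg (by positivity) (mul_nonneg (by linarith) (by linarith))
  have e8 : 0 ≤ s^2*x*y*(c2*c3) := by positivity
  have e9 : 0 ≤ s^2*x*y*c1 := by positivity
  have hstrict : 0 < s^2*x^2*((1-c3)*(1+c3)) + 2*(s*x*y^2*c3) := by
    rcases lt_or_ge c3 1 with h | h
    · have h1 : 0 < s^2*x^2*((1-c3)*(1+c3)) :=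
        mul_pos (by positivity) (mul_pos (by linarith) (by linarith))
      have h2 : 0 ≤ 2*(s*x*y^2*c3) := by positivity
      linarith
    · have hc : c3 = 1 := le_antisymm h31 h
      have h1 : 0 < 2*(s*x*y^2*c3) := by rw [hc]; positivity
      have h2 : 0 ≤ s^2*x^2*((1-c3)*(1+c3)) := by rw [hc]; simp
      linarith
  nlinarith [e1, e3, e4, e5, e6, e8, e9, hstrict]

private lemma aux1 (A' B' L a b sa sb : ℝ) (hsa : 0 < sa) (hsb : 0 < sb)
    (ha : sa^2 = a) (hb : sb^2 = b)
    (hN : 0 < A'*b*(a + L - b) + a*B'*(b + L - a)) :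
    0 < (A' + B') * (2*(sa*sb)) - (a + b - L) * (2*(A'/(2*sa)*sb + sa*(B'/(2*sb)))) := by
  subst ha hb
  have h : (A' + B') * (2*(sa*sb)) - (sa^2 + sb^2 - L) * (2*(A'/(2*sa)*sb + sa*(B'/(2*sb))))
      = (A'*sb^2*(sa^2 + L - sb^2) + sa^2*B'*(sb^2 + L - sa^2)) / (sa*sb) := by
    field_simp
    ring
  rw [h]
  exact div_pos hN (mul_pos hsa hsb)

private lemma aux2 (L a b sa sb : ℝ) (hsa : 0 < sa) (hsb : 0 < sb)
    (ha : sa^2 = a) (hb : sb^2 = b)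
    (h : (a + b - L)^2 < 4*a*b) :
    ((a + b - L)/(2*(sa*sb)))^2 < 1 := by
  subst ha hb
  rw [div_pow, div_lt_one (by positivity)]
  nlinarith [h]

/-- The angle `θ₁` at the first vertex is strictly decreasing in `r₁`. -/
theorem circleAngle_deriv_self_neg
    (r₁ r₂ r₃ Θ₁ Θ₂ Θ₃ : ℝ)
    (hr₁ : 0 < r₁) (hr₂ : 0 < r₂) (hr₃ : 0 < r₃)
    (hΘ₁ : Θ₁ ∈ Set.Icc 0 (π / 2)) (hΘ₂ : Θ₂ ∈ Set.Icc 0 (π / 2))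
    (hΘ₃ : Θ₃ ∈ Set.Icc 0 (π / 2)) :
    deriv (fun s => circleAngle Θ₁ Θ₂ Θ₃ s r₂ r₃) r₁ < 0 := by
  obtain ⟨hΘ₁0, hΘ₁1⟩ := hΘ₁
  obtain ⟨hΘ₂0, hΘ₂1⟩ := hΘ₂
  obtain ⟨hΘ₃0, hΘ₃1⟩ := hΘ₃
  have hpi := Real.pi_pos
  have hc10 : 0 ≤ Real.cos Θ₁ := Real.cos_nonneg_of_mem_Icc ⟨by linarith, hΘ₁1⟩
  have hc20 : 0 ≤ Real.cos Θ₂ := Real.cos_nonneg_of_mem_Icc ⟨by linarith, hΘ₂1⟩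
  have hc30 : 0 ≤ Real.cos Θ₃ := Real.cos_nonneg_of_mem_Icc ⟨by linarith, hΘ₃1⟩
  have hc11 : Real.cos Θ₁ ≤ 1 := Real.cos_le_one _
  have hc21 : Real.cos Θ₂ ≤ 1 := Real.cos_le_one _
  have hc31 : Real.cos Θ₃ ≤ 1 := Real.cos_le_one _
  have hA0 : 0 < r₁^2 + r₃^2 + 2*r₁*r₃*Real.cos Θ₂ := by
    nlinarith [mul_nonneg (mul_nonneg hr₁.le hr₃.le) hc20, pow_pos hr₁ 2, pow_pos hr₃ 2]
  have hB0 : 0 < r₁^2 + r₂^2 + 2*r₁*r₂*Real.cos Θ₃ := by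
    nlinarith [mul_nonneg (mul_nonneg hr₁.le hr₂.le) hc30, pow_pos hr₁ 2, pow_pos hr₂ 2]
  have hL0 : (0:ℝ) ≤ r₂^2 + r₃^2 + 2*r₂*r₃*Real.cos Θ₁ := by
    nlinarith [mul_nonneg (mul_nonneg hr₂.le hr₃.le) hc10, pow_pos hr₂ 2, pow_pos hr₃ 2]
  have hEq : (fun s => circleAngle Θ₁ Θ₂ Θ₃ s r₂ r₃) =ᶠ[nhds r₁]
      (fun s => Real.arccos ((s^2 + r₃^2 + 2*s*r₃*Real.cos Θ₂ +
          (s^2 + r₂^2 + 2*s*r₂*Real.cos Θ₃) - (r₂^2 + r₃^2 + 2*r₂*r₃*Real.cos Θ₁)) /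
        (2 * (Real.sqrt (s^2 + r₃^2 + 2*s*r₃*Real.cos Θ₂) *
          Real.sqrt (s^2 + r₂^2 + 2*s*r₂*Real.cos Θ₃))))) := by
    filter_upwards [eventually_gt_nhds hr₁] with s hs
    have hAs : (0:ℝ) ≤ s^2 + r₃^2 + 2*s*r₃*Real.cos Θ₂ := by
      nlinarith [mul_nonneg (mul_nonneg hs.le hr₃.le) hc20, sq_nonneg s, sq_nonneg r₃]
    have hBs : (0:ℝ) ≤ s^2 + r₂^2 + 2*s*r₂*Real.cos Θ₃ := by
      nlinarith [mul_nonneg (mul_nonneg hs.le hr₂.le) hc30, sq_nonneg s, sq_nonneg r₂]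
    simp only [circleAngle, circleEdgeLength]
    rw [Real.sq_sqrt hAs, Real.sq_sqrt hBs, Real.sq_sqrt hL0]
    congr 1
    ring
  rw [hEq.deriv_eq]
  -- derivatives of the two radicands
  have hA' : HasDerivAt (fun s : ℝ => s^2 + r₃^2 + 2*s*r₃*Real.cos Θ₂)
      (2*r₁ + 2*r₃*Real.cos Θ₂) r₁ := by
    have h1 : HasDerivAt (fun s : ℝ => s^2) (2*r₁) r₁ := by simpa using hasDerivAt_pow 2 r₁
    have h2 : HasDerivAt (fun s : ℝ => 2*s*r₃*Real.cos Θ₂) (2*r₃*Real.cos Θ₂) r₁ := by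
      have := (((hasDerivAt_id r₁).const_mul 2).mul_const r₃).mul_const (Real.cos Θ₂)
      simpa [mul_comm, mul_assoc, mul_left_comm] using this
    exact (h1.add_const (r₃^2)).add h2
  have hB' : HasDerivAt (fun s : ℝ => s^2 + r₂^2 + 2*s*r₂*Real.cos Θ₃)
      (2*r₁ + 2*r₂*Real.cos Θ₃) r₁ := by
    have h1 : HasDerivAt (fun s : ℝ => s^2) (2*r₁) r₁ := by simpa using hasDerivAt_pow 2 r₁
    have h2 : HasDerivAt (fun s : ℝ => 2*s*r₂*Real.cos Θ₃) (2*r₂*Real.cos Θ₃) r₁ := by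
      have := (((hasDerivAt_id r₁).const_mul 2).mul_const r₂).mul_const (Real.cos Θ₃)
      simpa [mul_comm, mul_assoc, mul_left_comm] using this
    exact (h1.add_const (r₂^2)).add h2
  have hsa' : HasDerivAt (fun s : ℝ => Real.sqrt (s^2 + r₃^2 + 2*s*r₃*Real.cos Θ₂))
      ((2*r₁ + 2*r₃*Real.cos Θ₂) / (2 * Real.sqrt (r₁^2 + r₃^2 + 2*r₁*r₃*Real.cos Θ₂))) r₁ :=
    hA'.sqrt (ne_of_gt hA0)
  have hsb' : HasDerivAt (fun s : ℝ => Real.sqrt (s^2 + r₂^2 + 2*s*r₂*Real.cos Θ₃))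
      ((2*r₁ + 2*r₂*Real.cos Θ₃) / (2 * Real.sqrt (r₁^2 + r₂^2 + 2*r₁*r₂*Real.cos Θ₃))) r₁ :=
    hB'.sqrt (ne_of_gt hB0)
  have hsapos : 0 < Real.sqrt (r₁^2 + r₃^2 + 2*r₁*r₃*Real.cos Θ₂) := Real.sqrt_pos.mpr hA0
  have hsbpos : 0 < Real.sqrt (r₁^2 + r₂^2 + 2*r₁*r₂*Real.cos Θ₃) := Real.sqrt_pos.mpr hB0
  have hnum : HasDerivAt (fun s : ℝ => s^2 + r₃^2 + 2*s*r₃*Real.cos Θ₂ +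
      (s^2 + r₂^2 + 2*s*r₂*Real.cos Θ₃) - (r₂^2 + r₃^2 + 2*r₂*r₃*Real.cos Θ₁))
      (2*r₁ + 2*r₃*Real.cos Θ₂ + (2*r₁ + 2*r₂*Real.cos Θ₃)) r₁ :=
    (hA'.add hB').sub_const _
  have hden : HasDerivAt (fun s : ℝ => 2 * (Real.sqrt (s^2 + r₃^2 + 2*s*r₃*Real.cos Θ₂) *
      Real.sqrt (s^2 + r₂^2 + 2*s*r₂*Real.cos Θ₃)))
      (2 * ((2*r₁ + 2*r₃*Real.cos Θ₂) / (2 * Real.sqrt (r₁^2 + r₃^2 + 2*r₁*r₃*Real.cos Θ₂)) *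
          Real.sqrt (r₁^2 + r₂^2 + 2*r₁*r₂*Real.cos Θ₃) +
        Real.sqrt (r₁^2 + r₃^2 + 2*r₁*r₃*Real.cos Θ₂) *
          ((2*r₁ + 2*r₂*Real.cos Θ₃) / (2 * Real.sqrt (r₁^2 + r₂^2 + 2*r₁*r₂*Real.cos Θ₃))))) r₁ :=
    (hsa'.mul hsb').const_mul 2
  have hDpos : 0 < 2 * (Real.sqrt (r₁^2 + r₃^2 + 2*r₁*r₃*Real.cos Θ₂) *
      Real.sqrt (r₁^2 + r₂^2 + 2*r₁*r₂*Real.cos Θ₃)) := by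
    have := mul_pos hsapos hsbpos; linarith
  have hG := hnum.div hden (ne_of_gt hDpos)
  have hg2 : ((r₁^2 + r₃^2 + 2*r₁*r₃*Real.cos Θ₂ + (r₁^2 + r₂^2 + 2*r₁*r₂*Real.cos Θ₃) -
      (r₂^2 + r₃^2 + 2*r₂*r₃*Real.cos Θ₁)) /
      (2 * (Real.sqrt (r₁^2 + r₃^2 + 2*r₁*r₃*Real.cos Θ₂) *
        Real.sqrt (r₁^2 + r₂^2 + 2*r₁*r₂*Real.cos Θ₃))))^2 < 1 :=
    aux2 _ _ _ _ _ hsapos hsbpos (Real.sq_sqrt hA0.le) (Real.sq_sqrt hB0.le)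
      (key2 r₁ r₂ r₃ (Real.cos Θ₁) (Real.cos Θ₂) (Real.cos Θ₃) hr₁ hr₂ hr₃
        hc10 hc11 hc20 hc21 hc30 hc31)
  set g : ℝ := (r₁^2 + r₃^2 + 2*r₁*r₃*Real.cos Θ₂ + (r₁^2 + r₂^2 + 2*r₁*r₂*Real.cos Θ₃) -
      (r₂^2 + r₃^2 + 2*r₂*r₃*Real.cos Θ₁)) /
      (2 * (Real.sqrt (r₁^2 + r₃^2 + 2*r₁*r₃*Real.cos Θ₂) *
        Real.sqrt (r₁^2 + r₂^2 + 2*r₁*r₂*Real.cos Θ₃))) with hgdef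
  have hgne1 : g ≠ 1 := by intro h; rw [h] at hg2; norm_num at hg2
  have hgnem1 : g ≠ -1 := by intro h; rw [h] at hg2; norm_num at hg2
  have hθ := (Real.hasDerivAt_arccos hgnem1 hgne1).comp r₁ hG
  have hde := hθ.deriv
  simp only [Function.comp_def, Pi.div_apply] at hde
  rw [hde]
  apply mul_neg_of_neg_of_pos
  · have h0 : 0 < Real.sqrt (1 - g^2) := Real.sqrt_pos.mpr (by nlinarith [hg2])
    have h1 : 0 < 1 / Real.sqrt (1 - g^2) := one_div_pos.mpr h0
    linarith
  · apply div_pos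
    · exact aux1 _ _ _ _ _ _ _ hsapos hsbpos (Real.sq_sqrt hA0.le) (Real.sq_sqrt hB0.le)
        (key1 r₁ r₂ r₃ (Real.cos Θ₁) (Real.cos Θ₂) (Real.cos Θ₃) hr₁ hr₂ hr₃
          hc10 hc20 hc21 hc30 hc31)
    · exact pow_pos hDpos 2
end

section
/- In the Euclidean circle-packing triangle with radii r₁, r₂, r₃ > 0 and angles Θ₁, Θ₂, Θ₃ ∈ [0, π/2], the symmetry relation (∂θ₁/∂r₂)·r₂ = (∂θ₂/∂r₁)·r₁ holds, where θ_i is the angle at vertex i. -/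
open Real

set_option maxHeartbeats 1000000

noncomputable def Dpoly (a b c x y z : ℝ) : ℝ :=
  2*((b^2+c^2+2*b*c*x)*(a^2+c^2+2*a*c*y)) + 2*((a^2+c^2+2*a*c*y)*(a^2+b^2+2*a*b*z))
    + 2*((b^2+c^2+2*b*c*x)*(a^2+b^2+2*a*b*z))
    - (b^2+c^2+2*b*c*x)^2 - (a^2+c^2+2*a*c*y)^2 - (a^2+b^2+2*a*b*z)^2

lemma circleAux (lw lu sD N Δ P : ℝ) (hlw : lw ≠ 0) (hlu : lu ≠ 0) (hsD : sD ≠ 0) :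
    -(1/(sD/(2*lw*lu))) * ((Δ * (2*lw*lu) - N * (2*lw*(P/(2*lu)))) / (2*lw*lu)^2)
    = (N*P - 2*Δ*lu^2) / (2*lu^2*sD) := by field_simp; ring

lemma circleKey (a b c x y z : ℝ) (ha : 0 < a) (hb : 0 < b) (hc : 0 < c)
    (hx0 : 0 ≤ x) (hx1 : x ≤ 1) (hy0 : 0 ≤ y) (hy1 : y ≤ 1) (hz0 : 0 ≤ z) (hz1 : z ≤ 1) :
    HasDerivAt (fun s => Real.arccos ((Real.sqrt (a^2+c^2+2*a*c*y)^2
        + Real.sqrt (a^2+s^2+2*a*s*z)^2 - Real.sqrt (s^2+c^2+2*s*c*x)^2)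
        / (2*Real.sqrt (a^2+c^2+2*a*c*y)*Real.sqrt (a^2+s^2+2*a*s*z))))
      (2*a*(a*b*(1-z^2)+b*c*(y+x*z)+a*c*(x+y*z))
        / ((a^2+b^2+2*a*b*z) * Real.sqrt (Dpoly a b c x y z))) b := by
  have hu : (0:ℝ) < a^2+b^2+2*a*b*z := by nlinarith [mul_pos ha hb, sq_nonneg a, sq_nonneg b]
  have hv : (0:ℝ) < b^2+c^2+2*b*c*x := by nlinarith [mul_pos hb hc]
  have hw : (0:ℝ) < a^2+c^2+2*a*c*y := by nlinarith [mul_pos ha hc]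
  have hlu : (0:ℝ) < Real.sqrt (a^2+b^2+2*a*b*z) := Real.sqrt_pos.2 hu
  have hlv : (0:ℝ) < Real.sqrt (b^2+c^2+2*b*c*x) := Real.sqrt_pos.2 hv
  have hlw : (0:ℝ) < Real.sqrt (a^2+c^2+2*a*c*y) := Real.sqrt_pos.2 hw
  have hlu2 : Real.sqrt (a^2+b^2+2*a*b*z)^2 = a^2+b^2+2*a*b*z := Real.sq_sqrt hu.le
  have hlv2 : Real.sqrt (b^2+c^2+2*b*c*x)^2 = b^2+c^2+2*b*c*x := Real.sq_sqrt hv.le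
  have hlw2 : Real.sqrt (a^2+c^2+2*a*c*y)^2 = a^2+c^2+2*a*c*y := Real.sq_sqrt hw.le
  -- strict triangle inequalities
  have hub : b < Real.sqrt (a^2+b^2+2*a*b*z) := by
    rw [Real.lt_sqrt hb.le]; nlinarith [mul_pos ha hb]
  have hua : a < Real.sqrt (a^2+b^2+2*a*b*z) := by
    rw [Real.lt_sqrt ha.le]; nlinarith [mul_pos ha hb]
  have hvb : b < Real.sqrt (b^2+c^2+2*b*c*x) := by
    rw [Real.lt_sqrt hb.le]; nlinarith [mul_pos hb hc]
  have hvc : c < Real.sqrt (b^2+c^2+2*b*c*x) := by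
    rw [Real.lt_sqrt hc.le]; nlinarith [mul_pos hb hc]
  have hwa : a < Real.sqrt (a^2+c^2+2*a*c*y) := by
    rw [Real.lt_sqrt ha.le]; nlinarith [mul_pos ha hc]
  have hwc : c < Real.sqrt (a^2+c^2+2*a*c*y) := by
    rw [Real.lt_sqrt hc.le]; nlinarith [mul_pos ha hc]
  have huab : Real.sqrt (a^2+b^2+2*a*b*z) ≤ a + b := by
    have h1 : a^2+b^2+2*a*b*z ≤ (a+b)^2 := by nlinarith [mul_pos ha hb]
    calc Real.sqrt (a^2+b^2+2*a*b*z) ≤ Real.sqrt ((a+b)^2) := Real.sqrt_le_sqrt h1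
    _ = a + b := Real.sqrt_sq (by linarith)
  have hvbc : Real.sqrt (b^2+c^2+2*b*c*x) ≤ b + c := by
    have h1 : b^2+c^2+2*b*c*x ≤ (b+c)^2 := by nlinarith [mul_pos hb hc]
    calc Real.sqrt (b^2+c^2+2*b*c*x) ≤ Real.sqrt ((b+c)^2) := Real.sqrt_le_sqrt h1
    _ = b + c := Real.sqrt_sq (by linarith)
  have hwac : Real.sqrt (a^2+c^2+2*a*c*y) ≤ a + c := by
    have h1 : a^2+c^2+2*a*c*y ≤ (a+c)^2 := by nlinarith [mul_pos ha hc]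
    calc Real.sqrt (a^2+c^2+2*a*c*y) ≤ Real.sqrt ((a+c)^2) := Real.sqrt_le_sqrt h1
    _ = a + c := Real.sqrt_sq (by linarith)
  -- positivity of Heron quantity
  have hDfac : Dpoly a b c x y z =
      (Real.sqrt (b^2+c^2+2*b*c*x) + Real.sqrt (a^2+c^2+2*a*c*y) + Real.sqrt (a^2+b^2+2*a*b*z))
      * (-Real.sqrt (b^2+c^2+2*b*c*x) + Real.sqrt (a^2+c^2+2*a*c*y) + Real.sqrt (a^2+b^2+2*a*b*z))
      * (Real.sqrt (b^2+c^2+2*b*c*x) - Real.sqrt (a^2+c^2+2*a*c*y) + Real.sqrt (a^2+b^2+2*a*b*z))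
      * (Real.sqrt (b^2+c^2+2*b*c*x) + Real.sqrt (a^2+c^2+2*a*c*y) - Real.sqrt (a^2+b^2+2*a*b*z)) := by
    have expand : ∀ p q r : ℝ, (p + q + r)*(-p + q + r)*(p - q + r)*(p + q - r)
        = 2*(p^2*q^2) + 2*(q^2*r^2) + 2*(p^2*r^2) - (p^2)^2 - (q^2)^2 - (r^2)^2 := by
      intro p q r; ring
    rw [Dpoly, expand, hlv2, hlw2, hlu2]
  have hDp : 0 < Dpoly a b c x y z := by
    rw [hDfac]
    have h1 : 0 < -Real.sqrt (b^2+c^2+2*b*c*x) + Real.sqrt (a^2+c^2+2*a*c*y)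
        + Real.sqrt (a^2+b^2+2*a*b*z) := by linarith
    have h2 : 0 < Real.sqrt (b^2+c^2+2*b*c*x) - Real.sqrt (a^2+c^2+2*a*c*y)
        + Real.sqrt (a^2+b^2+2*a*b*z) := by linarith
    have h3 : 0 < Real.sqrt (b^2+c^2+2*b*c*x) + Real.sqrt (a^2+c^2+2*a*c*y)
        - Real.sqrt (a^2+b^2+2*a*b*z) := by linarith
    have h0 : 0 < Real.sqrt (b^2+c^2+2*b*c*x) + Real.sqrt (a^2+c^2+2*a*c*y)
        + Real.sqrt (a^2+b^2+2*a*b*z) := by linarith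
    positivity
  have hsD : 0 < Real.sqrt (Dpoly a b c x y z) := Real.sqrt_pos.2 hDp
  -- derivative of inner polynomials
  have hUdiff : HasDerivAt (fun s : ℝ => a^2 + s^2 + 2*a*s*z) (2*b + 2*a*z) b := by
    have h1 : HasDerivAt (fun s : ℝ => s^2) (2*b) b := by simpa using hasDerivAt_pow 2 b
    have h2 : HasDerivAt (fun s : ℝ => 2*a*s*z) (2*a*z) b := by
      have := ((hasDerivAt_id b).const_mul (2*a)).mul_const z
      simpa [mul_assoc, mul_comm, mul_left_comm] using this
    have h3 := ((hasDerivAt_const b (a^2)).add h1).add h2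
    rw [zero_add] at h3
    exact h3
  have hVdiff : HasDerivAt (fun s : ℝ => s^2 + c^2 + 2*s*c*x) (2*b + 2*c*x) b := by
    have h1 : HasDerivAt (fun s : ℝ => s^2) (2*b) b := by simpa using hasDerivAt_pow 2 b
    have h2 : HasDerivAt (fun s : ℝ => 2*s*c*x) (2*c*x) b := by
      have := ((hasDerivAt_id b).const_mul (2:ℝ)).mul_const c |>.mul_const x
      simpa [mul_assoc, mul_comm, mul_left_comm] using this
    exact (h1.add_const (c^2)).add h2
  have hlusq : HasDerivAt (fun s : ℝ => Real.sqrt (a^2+s^2+2*a*s*z))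
      ((2*b + 2*a*z) / (2 * Real.sqrt (a^2+b^2+2*a*b*z))) b := hUdiff.sqrt hu.ne'
  -- numerator and denominator
  have hN : HasDerivAt (fun s : ℝ => (a^2+c^2+2*a*c*y) + (a^2+s^2+2*a*s*z) - (s^2+c^2+2*s*c*x))
      ((2*b + 2*a*z) - (2*b + 2*c*x)) b := (hUdiff.const_add (a^2+c^2+2*a*c*y)).sub hVdiff
  have hden : HasDerivAt (fun s : ℝ => 2*Real.sqrt (a^2+c^2+2*a*c*y)*Real.sqrt (a^2+s^2+2*a*s*z))
      (2*Real.sqrt (a^2+c^2+2*a*c*y) * ((2*b + 2*a*z) / (2 * Real.sqrt (a^2+b^2+2*a*b*z)))) b := by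
    simpa [mul_assoc] using hlusq.const_mul (2*Real.sqrt (a^2+c^2+2*a*c*y))
  have hdenb : (2:ℝ)*Real.sqrt (a^2+c^2+2*a*c*y)*Real.sqrt (a^2+b^2+2*a*b*z) ≠ 0 := by positivity
  have hphi : HasDerivAt (fun s : ℝ => ((a^2+c^2+2*a*c*y) + (a^2+s^2+2*a*s*z) - (s^2+c^2+2*s*c*x))
      / (2*Real.sqrt (a^2+c^2+2*a*c*y)*Real.sqrt (a^2+s^2+2*a*s*z)))
      ((((2*b + 2*a*z) - (2*b + 2*c*x)) * (2*Real.sqrt (a^2+c^2+2*a*c*y)*Real.sqrt (a^2+b^2+2*a*b*z))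
        - ((a^2+c^2+2*a*c*y) + (a^2+b^2+2*a*b*z) - (b^2+c^2+2*b*c*x))
          * (2*Real.sqrt (a^2+c^2+2*a*c*y) * ((2*b + 2*a*z) / (2 * Real.sqrt (a^2+b^2+2*a*b*z)))))
        / (2*Real.sqrt (a^2+c^2+2*a*c*y)*Real.sqrt (a^2+b^2+2*a*b*z))^2) b := hN.div hden hdenb
  -- quantitative facts about φ at b
  have hden2 : (2*Real.sqrt (a^2+c^2+2*a*c*y)*Real.sqrt (a^2+b^2+2*a*b*z))^2
      = 4*((a^2+c^2+2*a*c*y)*(a^2+b^2+2*a*b*z)) := by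
    rw [mul_pow, mul_pow, hlw2, hlu2]; ring
  have h1f : 1 - (((a^2+c^2+2*a*c*y) + (a^2+b^2+2*a*b*z) - (b^2+c^2+2*b*c*x))
      / (2*Real.sqrt (a^2+c^2+2*a*c*y)*Real.sqrt (a^2+b^2+2*a*b*z)))^2
      = Dpoly a b c x y z
        / (2*Real.sqrt (a^2+c^2+2*a*c*y)*Real.sqrt (a^2+b^2+2*a*b*z))^2 := by
    rw [div_pow, hden2, Dpoly]
    field_simp
    ring
  have hφsq : (((a^2+c^2+2*a*c*y) + (a^2+b^2+2*a*b*z) - (b^2+c^2+2*b*c*x))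
      / (2*Real.sqrt (a^2+c^2+2*a*c*y)*Real.sqrt (a^2+b^2+2*a*b*z)))^2 < 1 := by
    nlinarith [h1f, div_pos hDp (by positivity :
      (0:ℝ) < (2*Real.sqrt (a^2+c^2+2*a*c*y)*Real.sqrt (a^2+b^2+2*a*b*z))^2)]
  have hne1 : ((a^2+c^2+2*a*c*y) + (a^2+b^2+2*a*b*z) - (b^2+c^2+2*b*c*x))
      / (2*Real.sqrt (a^2+c^2+2*a*c*y)*Real.sqrt (a^2+b^2+2*a*b*z)) ≠ -1 := by
    intro h; rw [h] at hφsq; norm_num at hφsq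
  have hne2 : ((a^2+c^2+2*a*c*y) + (a^2+b^2+2*a*b*z) - (b^2+c^2+2*b*c*x))
      / (2*Real.sqrt (a^2+c^2+2*a*c*y)*Real.sqrt (a^2+b^2+2*a*b*z)) ≠ 1 := by
    intro h; rw [h] at hφsq; norm_num at hφsq
  have hsq1f : Real.sqrt (1 - (((a^2+c^2+2*a*c*y) + (a^2+b^2+2*a*b*z) - (b^2+c^2+2*b*c*x))
      / (2*Real.sqrt (a^2+c^2+2*a*c*y)*Real.sqrt (a^2+b^2+2*a*b*z)))^2)
      = Real.sqrt (Dpoly a b c x y z)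
        / (2*Real.sqrt (a^2+c^2+2*a*c*y)*Real.sqrt (a^2+b^2+2*a*b*z)) := by
    rw [h1f, Real.sqrt_div hDp.le, Real.sqrt_sq (by positivity)]
  -- derivative of arccos ∘ φ
  have harc := (Real.hasDerivAt_arccos hne1 hne2).comp b hphi
  -- the original function agrees with arccos ∘ φ near b
  have hev : (fun s => Real.arccos ((Real.sqrt (a^2+c^2+2*a*c*y)^2
        + Real.sqrt (a^2+s^2+2*a*s*z)^2 - Real.sqrt (s^2+c^2+2*s*c*x)^2)
        / (2*Real.sqrt (a^2+c^2+2*a*c*y)*Real.sqrt (a^2+s^2+2*a*s*z))))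
      =ᶠ[nhds b] (fun s => Real.arccos (((a^2+c^2+2*a*c*y) + (a^2+s^2+2*a*s*z) - (s^2+c^2+2*s*c*x))
        / (2*Real.sqrt (a^2+c^2+2*a*c*y)*Real.sqrt (a^2+s^2+2*a*s*z)))) := by
    filter_upwards [Ioi_mem_nhds hb] with s hs
    have hs0 : (0:ℝ) < s := hs
    rw [Real.sq_sqrt hw.le, Real.sq_sqrt (by nlinarith [mul_pos ha hs0] : (0:ℝ) ≤ a^2+s^2+2*a*s*z),
      Real.sq_sqrt (by nlinarith [mul_pos hs0 hc] : (0:ℝ) ≤ s^2+c^2+2*s*c*x)]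
  have hfinal := harc.congr_of_eventuallyEq hev
  refine hfinal.congr_deriv ?_
  -- now prove the value equality
  rw [hsq1f]
  rw [circleAux _ _ _ _ _ _ hlw.ne' hlu.ne' hsD.ne', hlu2]
  rw [div_eq_div_iff (by positivity) (by positivity)]
  ring

/-- Symmetry relation `(∂θ₁/∂r₂)·r₂ = (∂θ₂/∂r₁)·r₁` for the circle-packing
triangle angles; here `θ₂ = circleAngle Θ₂ Θ₁ Θ₃ r₂ r₁ r₃` is the angle at the
second vertex. -/
theorem circleAngle_deriv_symmetry
    (r₁ r₂ r₃ Θ₁ Θ₂ Θ₃ : ℝ)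
    (hr₁ : 0 < r₁) (hr₂ : 0 < r₂) (hr₃ : 0 < r₃)
    (hΘ₁ : Θ₁ ∈ Set.Icc 0 (π / 2)) (hΘ₂ : Θ₂ ∈ Set.Icc 0 (π / 2))
    (hΘ₃ : Θ₃ ∈ Set.Icc 0 (π / 2)) :
    deriv (fun s => circleAngle Θ₁ Θ₂ Θ₃ r₁ s r₃) r₂ * r₂ =
      deriv (fun s => circleAngle Θ₂ Θ₁ Θ₃ r₂ s r₃) r₁ * r₁ := by
  have hpi : (0:ℝ) ≤ π / 2 := by positivity
  have hx0 : 0 ≤ Real.cos Θ₁ :=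
    Real.cos_nonneg_of_mem_Icc ⟨by linarith [hΘ₁.1], hΘ₁.2⟩
  have hy0 : 0 ≤ Real.cos Θ₂ :=
    Real.cos_nonneg_of_mem_Icc ⟨by linarith [hΘ₂.1], hΘ₂.2⟩
  have hz0 : 0 ≤ Real.cos Θ₃ :=
    Real.cos_nonneg_of_mem_Icc ⟨by linarith [hΘ₃.1], hΘ₃.2⟩
  have hx1 : Real.cos Θ₁ ≤ 1 := Real.cos_le_one _
  have hy1 : Real.cos Θ₂ ≤ 1 := Real.cos_le_one _
  have hz1 : Real.cos Θ₃ ≤ 1 := Real.cos_le_one _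
  have h1 := (circleKey r₁ r₂ r₃ (Real.cos Θ₁) (Real.cos Θ₂) (Real.cos Θ₃)
    hr₁ hr₂ hr₃ hx0 hx1 hy0 hy1 hz0 hz1).deriv
  have h2 := (circleKey r₂ r₁ r₃ (Real.cos Θ₂) (Real.cos Θ₁) (Real.cos Θ₃)
    hr₂ hr₁ hr₃ hy0 hy1 hx0 hx1 hz0 hz1).deriv
  have hD : Dpoly r₂ r₁ r₃ (Real.cos Θ₂) (Real.cos Θ₁) (Real.cos Θ₃)
      = Dpoly r₁ r₂ r₃ (Real.cos Θ₁) (Real.cos Θ₂) (Real.cos Θ₃) := by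
    simp only [Dpoly]; ring
  simp only [circleAngle, circleEdgeLength]
  rw [h1, h2, hD]
  ring
end

section
/- Let v be a vertex of a Euclidean quadrilateral circle pattern cell with vertices v, v₁, v₂, u, where v is adjacent to v₁ and v₂, all four boundary edges have weight π/2 and the diagonal through v has weight 0. If all four radii are positive, then the angle at v in the quadrilateral (computed by dividing along either diagonal with a weight-0 diagonal edge) is independent of the choice of diagonal: dividing by the diagonal not through v gives the same angle at v as the sum of the two angles at v obtained by dividing along the diagonal through v. -/
open Real

/-- In a degenerate quadrilateral circle-pattern cell with vertices
`v, v₁, v₂, u` (boundary edges of weight `π/2`, diagonal edges of weight `0`),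
the angle at `v` does not depend on the choice of diagonal: dividing along the
diagonal not through `v` gives at `v` the angle
`arccos((r_v² − r_{v₁} r_{v₂})/(√(r_v²+r_{v₁}²)·√(r_v²+r_{v₂}²)))`, which
equals the sum of the two angles at `v` obtained by dividing along the
diagonal through `v`. -/
theorem quadrilateral_angle_diagonal_independent
    (rv rv₁ rv₂ ru : ℝ) (hrv : 0 < rv) (hrv₁ : 0 < rv₁) (hrv₂ : 0 < rv₂)
    (hru : 0 < ru) :
    Real.arccos ((rv ^ 2 - rv₁ * rv₂) /
        (Real.sqrt (rv ^ 2 + rv₁ ^ 2) * Real.sqrt (rv ^ 2 + rv₂ ^ 2))) =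
      Real.arccos (rv / Real.sqrt (rv ^ 2 + rv₁ ^ 2)) +
        Real.arccos (rv / Real.sqrt (rv ^ 2 + rv₂ ^ 2)) := by
  set a := Real.sqrt (rv ^ 2 + rv₁ ^ 2) with ha
  set b := Real.sqrt (rv ^ 2 + rv₂ ^ 2) with hb
  have ha0 : 0 < a := Real.sqrt_pos.mpr (by positivity)
  have hb0 : 0 < b := Real.sqrt_pos.mpr (by positivity)
  have ha2 : a ^ 2 = rv ^ 2 + rv₁ ^ 2 := Real.sq_sqrt (by positivity)
  have hb2 : b ^ 2 = rv ^ 2 + rv₂ ^ 2 := Real.sq_sqrt (by positivity)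
  set θ₁ := Real.arccos (rv / a)
  set θ₂ := Real.arccos (rv / b)
  have hx1 : rv / a ≤ 1 := by
    rw [div_le_one ha0]
    calc rv = Real.sqrt (rv ^ 2) := (Real.sqrt_sq hrv.le).symm
    _ ≤ a := Real.sqrt_le_sqrt (by nlinarith)
  have hx2 : rv / b ≤ 1 := by
    rw [div_le_one hb0]
    calc rv = Real.sqrt (rv ^ 2) := (Real.sqrt_sq hrv.le).symm
    _ ≤ b := Real.sqrt_le_sqrt (by nlinarith)
  have hx1' : 0 < rv / a := by positivity
  have hx2' : 0 < rv / b := by positivity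
  have hc1 : Real.cos θ₁ = rv / a := Real.cos_arccos (by linarith) hx1
  have hc2 : Real.cos θ₂ = rv / b := Real.cos_arccos (by linarith) hx2
  have hs1 : Real.sin θ₁ = rv₁ / a := by
    rw [Real.sin_arccos]
    rw [show (1 : ℝ) - (rv / a) ^ 2 = (rv₁ / a) ^ 2 by
      field_simp; nlinarith]
    exact Real.sqrt_sq (by positivity)
  have hs2 : Real.sin θ₂ = rv₂ / b := by
    rw [Real.sin_arccos]
    rw [show (1 : ℝ) - (rv / b) ^ 2 = (rv₂ / b) ^ 2 by
      field_simp; nlinarith]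
    exact Real.sqrt_sq (by positivity)
  have hθ₁lt : θ₁ < π / 2 := by
    have := Real.arccos_lt_pi_div_two (x := rv / a)
    exact this.mpr hx1'
  have hθ₂lt : θ₂ < π / 2 := by
    have := Real.arccos_lt_pi_div_two (x := rv / b)
    exact this.mpr hx2'
  have h0₁ : 0 ≤ θ₁ := Real.arccos_nonneg _
  have h0₂ : 0 ≤ θ₂ := Real.arccos_nonneg _
  have key : Real.cos (θ₁ + θ₂) = (rv ^ 2 - rv₁ * rv₂) / (a * b) := by
    rw [Real.cos_add, hc1, hc2, hs1, hs2]
    field_simp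
  rw [← key, Real.arccos_cos (by linarith) (by linarith)]
end
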